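/- Let (s(n)) be a non-negative real sequence, ν > 2, and suppose there exist a bound C > 0 and sequences a(n) of positive integers with 1 ≤ a(n) ≤ A such that |s(n+1) − ((1 − ν^(−a(n)))/(ν − 1))·s(n) − ν^(−a(n−1))·s(n−1)| ≤ C for all n. Then (s(n)) is bounded. -/
import Mathlib


theorem stmt_9 (ν : ℝ) (hν : 2 < ν) (A : ℕ) (hA : 1 ≤ A)
    (a : ℕ → ℕ) (ha : ∀ n, 1 ≤ a n ∧ a n ≤ A)
    (s : ℕ → ℝ) (hs : ∀ n, 0 ≤ s n)
    (C : ℝ) (hC : 0 < C)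
    (hrec : ∀ n, |s (n + 1) - (1 - ν ^ (-(a n : ℝ))) / (ν - 1) * s n
      - ν ^ (-(a (n - 1) : ℝ)) * s (n - 1)| ≤ C) :
    ∃ M : ℝ, ∀ n, s n ≤ M := by
  have hν0 : (0:ℝ) < ν := by linarith
  have hν1 : (1:ℝ) < ν := by linarith
  set θ : ℝ := (ν + 2) / (2 * ν) with hθdef
  set c : ℝ := (2 * ν) / (ν + 2) with hcdef
  have hθpos : 0 < θ := div_pos (by linarith) (by linarith)
  have hθlt : θ < 1 := by
    rw [hθdef, div_lt_one (by linarith)]; linarith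
  have hcpos : 0 < c := div_pos (by linarith) (by linarith)
  have hθc : θ * c = 1 := by
    rw [hθdef, hcdef]; field_simp
  have hc2 : c * (ν + 2) = 2 * ν := by
    rw [hcdef]; field_simp
  have hθ2 : θ * (2 * ν) = ν + 2 := by
    rw [hθdef]; field_simp
  have hxpos : ∀ n, 0 < ν ^ (-(a n : ℝ)) := fun n => Real.rpow_pos_of_pos hν0 _
  have hx : ∀ n, ν ^ (-(a n : ℝ)) * ν ≤ 1 := by
    intro n
    have h1 : ν ^ (-(a n : ℝ)) ≤ ν ^ (-(1:ℝ)) := by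
      apply Real.rpow_le_rpow_of_exponent_le (le_of_lt hν1)
      have := (ha n).1
      have : (1:ℝ) ≤ (a n : ℝ) := by exact_mod_cast this
      linarith
    have h2 : ν ^ (-(1:ℝ)) = ν⁻¹ := Real.rpow_neg_one ν
    rw [h2] at h1
    calc ν ^ (-(a n : ℝ)) * ν ≤ ν⁻¹ * ν := by
          apply mul_le_mul_of_nonneg_right h1 (le_of_lt hν0)
      _ = 1 := inv_mul_cancel₀ (ne_of_gt hν0)
  set V : ℕ → ℝ := fun n => s n + c * ν ^ (-(a (n - 1) : ℝ)) * s (n - 1) with hV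
  have hVge : ∀ n, s n ≤ V n := by
    intro n
    have : 0 ≤ c * ν ^ (-(a (n - 1) : ℝ)) * s (n - 1) :=
      mul_nonneg (mul_nonneg hcpos.le (hxpos _).le) (hs _)
    simp only [hV]; linarith
  have hV0 : 0 ≤ V 0 := le_trans (hs 0) (hVge 0)
  have hstep : ∀ n, V (n + 1) ≤ θ * V n + C := by
    intro n
    have h := abs_le.mp (hrec n)
    have h1 : s (n + 1) ≤ (1 - ν ^ (-(a n : ℝ))) / (ν - 1) * s n
        + ν ^ (-(a (n - 1) : ℝ)) * s (n - 1) + C := by linarith [h.2]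
    have key : (1 - ν ^ (-(a n : ℝ))) / (ν - 1) + c * ν ^ (-(a n : ℝ)) ≤ θ := by
      set x := ν ^ (-(a n : ℝ)) with hxdef
      have hx0 : 0 < x := hxpos n
      have hx1 : x * ν ≤ 1 := hx n
      rw [div_add' _ _ _ (by linarith : ν - 1 ≠ 0), div_le_iff₀ (by linarith : (0:ℝ) < ν - 1)]
      nlinarith [mul_pos hx0 hν0, mul_le_mul_of_nonneg_left hx1 hcpos.le,
        mul_le_mul_of_nonneg_left hx1 (le_of_lt (mul_pos hcpos hν0)), sq_nonneg (ν - 2),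
        mul_pos (mul_pos hcpos hx0) hν0]
    have hsn1 : (n + 1) - 1 = n := rfl
    have hVn1 : V (n + 1) = s (n + 1) + c * ν ^ (-(a n : ℝ)) * s n := by
      simp only [hV, hsn1]
    rw [hVn1]
    have hθcterm : ν ^ (-(a (n - 1) : ℝ)) * s (n - 1)
        ≤ θ * (c * ν ^ (-(a (n - 1) : ℝ)) * s (n - 1)) := by
      have : θ * (c * ν ^ (-(a (n - 1) : ℝ)) * s (n - 1))
          = (θ * c) * (ν ^ (-(a (n - 1) : ℝ)) * s (n - 1)) := by ring
      rw [this, hθc, one_mul]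
    have hsnn : 0 ≤ s n := hs n
    have hcoef : ((1 - ν ^ (-(a n : ℝ))) / (ν - 1) + c * ν ^ (-(a n : ℝ))) * s n ≤ θ * s n :=
      mul_le_mul_of_nonneg_right key hsnn
    simp only [hV]
    nlinarith [hcoef, hθcterm, h1]
  clear hθdef hcdef hV hθc hc2 hθ2 hx hxpos hrec hcpos
  clear_value θ c V
  have hD : (1 - θ) * (C / (1 - θ)) = C := by
    rw [mul_comm, div_mul_cancel₀ _ (ne_of_gt (by linarith : (0:ℝ) < 1 - θ))]
  have hbound : ∀ n, V n ≤ V 0 + C / (1 - θ) := by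
    intro n
    induction n with
    | zero =>
      have : 0 < C / (1 - θ) := div_pos hC (by linarith)
      linarith
    | succ k ih =>
      have h1 := hstep k
      have h2 : θ * V k ≤ θ * (V 0 + C / (1 - θ)) :=
        mul_le_mul_of_nonneg_left ih hθpos.le
      have e : θ * (C / (1 - θ)) + C = C / (1 - θ) := by linear_combination -hD
      have h4 : θ * V 0 ≤ V 0 := mul_le_of_le_one_left hV0 hθlt.le
      have h5 : θ * (V 0 + C / (1 - θ)) = θ * V 0 + θ * (C / (1 - θ)) := by ring
      linarith
  exact ⟨V 0 + C / (1 - θ), fun n => le_trans (hVge n) (hbound n)⟩
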